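/- arXiv:math/0303362 — 3 statements merged into one kernel-verified Lean document; each statement's English description precedes it below -/
import Mathlib

section
/- For all integers m, n, p with m + n + p = 0, the identity [m−n]⟨p⟩γ_p + [n−p]⟨m⟩γ_m + [p−m]⟨n⟩γ_n = 0 holds. -/
/-- The q-integer `[m] = (q^m - q^(-m))/(q - q⁻¹)`, for real `q`. -/
noncomputable def qInt (q : ℝ) (m : ℤ) : ℝ := (q ^ m - q ^ (-m)) / (q - q⁻¹)

/-- `⟨m⟩ = q^m + q^(-m)`, for real `q`. -/
noncomputable def qBra (q : ℝ) (m : ℤ) : ℝ := q ^ m + q ^ (-m)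

/-- `γ_m = [m+1][m][m−1]/([2][3]⟨m⟩)`. -/
noncomputable def qGamma (q : ℝ) (m : ℤ) : ℝ :=
  qInt q (m + 1) * qInt q m * qInt q (m - 1) / (qInt q 2 * qInt q 3 * qBra q m)

set_option maxHeartbeats 2000000 in
/-- For all integers `m, n, p` with `m + n + p = 0`:
`[m−n]⟨p⟩γ_p + [n−p]⟨m⟩γ_m + [p−m]⟨n⟩γ_n = 0`. -/
theorem qGamma_cyclic_identity (q : ℝ) (hq : 0 < q) (hq1 : q ≠ 1)
    (m n p : ℤ) (h : m + n + p = 0) :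
    qInt q (m - n) * qBra q p * qGamma q p
      + qInt q (n - p) * qBra q m * qGamma q m
      + qInt q (p - m) * qBra q n * qGamma q n = 0 := by
  have hp : p = -m - n := by omega
  subst hp
  have hq0 : q ≠ 0 := ne_of_gt hq
  have hs : q - q⁻¹ ≠ 0 := by
    intro hcon
    have h1 : q = q⁻¹ := by linarith
    have h2 : q * q = 1 := by
      field_simp at h1
      nlinarith [h1]
    have : q = 1 := by nlinarith
    exact hq1 this
  have hA : q * q - 1 ≠ 0 := by
    intro hcon
    have : q = 1 := by nlinarith
    exact hq1 this
  have e2 : q ^ (2:ℤ) = q * q := by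
    rw [show (2:ℤ) = 1 + 1 by norm_num, zpow_add₀ hq0, zpow_one]
  have e3 : q ^ (3:ℤ) = q * q * q := by
    rw [show (3:ℤ) = 1 + 1 + 1 by norm_num, zpow_add₀ hq0, zpow_add₀ hq0, zpow_one]
  have ha : q ^ m > 0 := zpow_pos hq m
  have hb : q ^ n > 0 := zpow_pos hq n
  have ha' : q ^ m ≠ 0 := ne_of_gt ha
  have hb' : q ^ n ≠ 0 := ne_of_gt hb
  have hbm : q ^ m * q ^ m + 1 ≠ 0 := by positivity
  have hbn : q ^ n * q ^ n + 1 ≠ 0 := by positivity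
  have hbp : 1 + q ^ m * q ^ n * (q ^ m * q ^ n) ≠ 0 := by positivity
  have hq2' : q ^ (2:ℤ) ≠ 0 := by rw [e2]; positivity
  have hq3' : q ^ (3:ℤ) ≠ 0 := by rw [e3]; positivity
  have hB : q ^ (2:ℤ) * q ^ (2:ℤ) - 1 ≠ 0 := by
    rw [e2]
    intro hcon
    have hf : (q - 1) * (q * q * q + q * q + q + 1) = 0 := by linear_combination hcon
    have hpos : q * q * q + q * q + q + 1 > 0 := by positivity
    have : q - 1 = 0 := by
      rcases mul_eq_zero.mp hf with h' | h'
      · exact h'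
      · linarith
    exact hq1 (by linarith)
  have hC : q ^ (3:ℤ) * q ^ (3:ℤ) - 1 ≠ 0 := by
    rw [e3]
    intro hcon
    have hf : (q - 1) * (q*q*q*q*q + q*q*q*q + q*q*q + q*q + q + 1) = 0 := by
      linear_combination hcon
    have hpos : q*q*q*q*q + q*q*q*q + q*q*q + q*q + q + 1 > 0 := by positivity
    have : q - 1 = 0 := by
      rcases mul_eq_zero.mp hf with h' | h'
      · exact h'
      · linarith
    exact hq1 (by linarith)
  have hq2 : q ^ (2:ℤ) - (q ^ (2:ℤ))⁻¹ ≠ 0 := by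
    intro hcon
    have heq : q ^ (2:ℤ) = (q ^ (2:ℤ))⁻¹ := sub_eq_zero.mp hcon
    apply hB
    nth_rewrite 1 [heq]
    rw [inv_mul_cancel₀ hq2']
    ring
  have hq3 : q ^ (3:ℤ) - (q ^ (3:ℤ))⁻¹ ≠ 0 := by
    intro hcon
    have heq : q ^ (3:ℤ) = (q ^ (3:ℤ))⁻¹ := sub_eq_zero.mp hcon
    apply hC
    nth_rewrite 1 [heq]
    rw [inv_mul_cancel₀ hq3']
    ring
  simp only [qInt, qBra, qGamma]
  simp only [zpow_sub₀ hq0, zpow_add₀ hq0, zpow_neg, zpow_one]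
  field_simp
  ring
end

section
/- With the bracket [d_m, d_n] = [m−n]·d_{m+n} + δ_{m+n,0}·γ_m·c, [d_m, c] = [c, d_m] = [c, c] = 0, extended bilinearly to V, and with the linear map Γ : V → V given by Γ(d_p) = ⟨p⟩·d_p and Γ(c) = c, the twisted Jacobi identity [[d_m, d_n], Γ(d_p)] + [[d_n, d_p], Γ(d_m)] + [[d_p, d_m], Γ(d_n)] = 0 holds for all integers m, n, p. -/
/-- The free real vector space with basis `{d_m : m ∈ ℤ} ∪ {c}`, realized as finitely
supported functions on `Option ℤ`. -/
abbrev V : Type := Option ℤ →₀ ℝ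

/-- The basis vector `d_m`. -/
noncomputable def d (m : ℤ) : V := Finsupp.single (some m) 1

/-- The central basis vector `c`. -/
noncomputable def c : V := Finsupp.single none 1

/-- The bracket on basis vectors: `[d_m, d_n] = [m−n]·d_{m+n} + δ_{m+n,0}·γ_m·c`,
and `[d_m, c] = [c, d_m] = [c, c] = 0`. -/
noncomputable def bracketBasis (q : ℝ) : Option ℤ → Option ℤ → V
  | some m, some n =>
      qInt q (m - n) • d (m + n) + (if m + n = 0 then qGamma q m else 0) • c
  | _, _ => 0

/-- The bracket, extended bilinearly to `V`. -/
noncomputable def B (q : ℝ) (x y : V) : V :=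
  x.sum fun i a => y.sum fun j b => (a * b) • bracketBasis q i j

/-- The twist `Γ : V → V`, the linear map with `Γ(d_p) = ⟨p⟩·d_p` and `Γ(c) = c`. -/
noncomputable def Gam (q : ℝ) (x : V) : V :=
  x.sum fun i a =>
    match i with
    | some p => Finsupp.single (some p) (qBra q p * a)
    | none => Finsupp.single none a

/-! ### Auxiliary lemmas -/

lemma qden_ne (q : ℝ) (hq : 0 < q) (hq1 : q ≠ 1) : q - q⁻¹ ≠ 0 := by
  have hq0 : q ≠ 0 := hq.ne'
  intro h
  have h2 : q * q = 1 := by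
    have := sub_eq_zero.mp h
    field_simp at this
    linarith [this]
  have h3 : (q - 1) * (q + 1) = 0 := by nlinarith
  rcases mul_eq_zero.mp h3 with h4 | h4
  · exact hq1 (by linarith)
  · linarith

lemma qBra_pos (q : ℝ) (hq : 0 < q) (k : ℤ) : 0 < qBra q k :=
  add_pos (zpow_pos hq _) (zpow_pos hq _)

lemma qBra_neg (q : ℝ) (k : ℤ) : qBra q (-k) = qBra q k := by
  simp [qBra, add_comm]

lemma qInt_two (q : ℝ) (hq : 0 < q) (hq1 : q ≠ 1) : qInt q 2 = q + q⁻¹ := by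
  have hq0 : q ≠ 0 := hq.ne'
  rw [qInt, div_eq_iff (qden_ne q hq hq1)]
  have h2 : q ^ (2:ℤ) = q * q := by norm_num [zpow_two, pow_two]
  have h2' : q ^ (-2:ℤ) = (q*q)⁻¹ := by rw [← h2, zpow_neg]
  rw [h2, h2']
  field_simp
  ring

lemma qInt_three (q : ℝ) (hq : 0 < q) (hq1 : q ≠ 1) : qInt q 3 = q*q + 1 + (q*q)⁻¹ := by
  have hq0 : q ≠ 0 := hq.ne'
  rw [qInt, div_eq_iff (qden_ne q hq hq1)]
  have h2 : q ^ (3:ℤ) = q * q * q := by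
    rw [show (3:ℤ) = ((3:ℕ):ℤ) by norm_num, zpow_natCast]; ring
  have h2' : q ^ (-3:ℤ) = (q*q*q)⁻¹ := by rw [← h2, zpow_neg]
  rw [h2, h2']
  field_simp
  ring

lemma qInt_two_pos (q : ℝ) (hq : 0 < q) (hq1 : q ≠ 1) : 0 < qInt q 2 := by
  rw [qInt_two q hq hq1]; positivity

lemma qInt_three_pos (q : ℝ) (hq : 0 < q) (hq1 : q ≠ 1) : 0 < qInt q 3 := by
  rw [qInt_three q hq hq1]; positivity

lemma bra_gamma (q : ℝ) (hq : 0 < q) (hq1 : q ≠ 1) (k : ℤ) :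
    qBra q k * qGamma q k
      = qInt q (k+1) * qInt q k * qInt q (k-1) / (qInt q 2 * qInt q 3) := by
  have h2 := (qInt_two_pos q hq hq1).ne'
  have h3 := (qInt_three_pos q hq hq1).ne'
  have hb := (qBra_pos q hq k).ne'
  rw [qGamma]
  field_simp

lemma key1 (q : ℝ) (hq : 0 < q) (hq1 : q ≠ 1) (m n p : ℤ) :
    qInt q (m-n) * qBra q p * qInt q (m+n-p) + qInt q (n-p) * qBra q m * qInt q (n+p-m)
      + qInt q (p-m) * qBra q n * qInt q (p+m-n) = 0 := by
  have hq0 : q ≠ 0 := hq.ne'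
  have hden : q - q⁻¹ ≠ 0 := qden_ne q hq hq1
  have hm : q ^ m ≠ 0 := zpow_ne_zero _ hq0
  have hn : q ^ n ≠ 0 := zpow_ne_zero _ hq0
  have hp : q ^ p ≠ 0 := zpow_ne_zero _ hq0
  simp only [qInt, qBra, zpow_sub₀ hq0, zpow_add₀ hq0, zpow_neg, zpow_one]
  field_simp
  ring

lemma key2 (q : ℝ) (hq : 0 < q) (hq1 : q ≠ 1) (m n p : ℤ) (hmnp : m + n + p = 0) :
    qInt q (m-n) * qBra q p * qGamma q (m+n) + qInt q (n-p) * qBra q m * qGamma q (n+p)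
      + qInt q (p-m) * qBra q n * qGamma q (p+m) = 0 := by
  have hq0 : q ≠ 0 := hq.ne'
  have hden : q - q⁻¹ ≠ 0 := qden_ne q hq hq1
  have hp' : p = -(m+n) := by omega
  subst hp'
  have h2 := (qInt_two_pos q hq hq1).ne'
  have h3 := (qInt_three_pos q hq hq1).ne'
  have e1 : qBra q (-(m+n)) = qBra q (m+n) := qBra_neg q _
  have e2 : qBra q m = qBra q (-m) := (qBra_neg q m).symm
  have e3 : qBra q n = qBra q (-n) := (qBra_neg q n).symm
  have e4 : n + -(m+n) = -m := by ring
  have e5 : -(m+n) + m = -n := by ring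
  rw [e1, e2, e3, e4, e5, mul_assoc, mul_assoc, mul_assoc,
    bra_gamma q hq hq1, bra_gamma q hq hq1, bra_gamma q hq hq1]
  have hm : q ^ m ≠ 0 := zpow_ne_zero _ hq0
  have hn : q ^ n ≠ 0 := zpow_ne_zero _ hq0
  simp only [← mul_div_assoc]
  rw [← add_div, ← add_div, div_eq_zero_iff]
  left
  simp only [qInt, div_eq_mul_inv]
  generalize (q - q⁻¹)⁻¹ = u
  simp only [zpow_sub₀ hq0, zpow_add₀ hq0, zpow_neg, zpow_one]
  field_simp
  ring

lemma B_single (q : ℝ) (i j : Option ℤ) (a b : ℝ) :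
    B q (Finsupp.single i a) (Finsupp.single j b) = (a * b) • bracketBasis q i j := by
  classical
  unfold B
  rw [Finsupp.sum_single_index, Finsupp.sum_single_index]
  · simp
  · simp [Finsupp.sum_single_index]

lemma B_add_left (q : ℝ) (x y z : V) : B q (x + y) z = B q x z + B q y z := by
  classical
  unfold B
  rw [Finsupp.sum_add_index']
  · intro i; simp
  · intro i a₁ a₂; simp [add_mul, add_smul, Finsupp.sum_add]

lemma Gam_d (q : ℝ) (p : ℤ) : Gam q (d p) = Finsupp.single (some p) (qBra q p) := by
  classical
  unfold Gam d
  rw [Finsupp.sum_single_index] <;> simp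

lemma B_dd (q : ℝ) (m n : ℤ) : B q (d m) (d n) = bracketBasis q (some m) (some n) := by
  rw [d, d, B_single]; simp

lemma bb_eq (q : ℝ) (m n : ℤ) :
    bracketBasis q (some m) (some n)
      = Finsupp.single (some (m + n)) (qInt q (m - n))
        + Finsupp.single none (if m + n = 0 then qGamma q m else 0) := by
  simp only [bracketBasis, d, c, Finsupp.smul_single, smul_eq_mul, mul_one]

lemma term_eq (q : ℝ) (m n p : ℤ) :
    B q (B q (d m) (d n)) (Gam q (d p))
      = Finsupp.single (some (m + n + p)) (qInt q (m - n) * qBra q p * qInt q (m + n - p))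
        + Finsupp.single none
            (qInt q (m - n) * qBra q p * (if m + n + p = 0 then qGamma q (m + n) else 0)) := by
  rw [B_dd, Gam_d, bb_eq, B_add_left, B_single, B_single]
  show _ + (_ : ℝ) • (0:V) = _
  rw [smul_zero, add_zero, bb_eq]
  simp only [smul_add, Finsupp.smul_single, smul_eq_mul, mul_ite, mul_zero]

/-- Twisted Jacobi identity:
`[[d_m, d_n], Γ(d_p)] + [[d_n, d_p], Γ(d_m)] + [[d_p, d_m], Γ(d_n)] = 0`. -/
theorem twisted_jacobi (q : ℝ) (hq : 0 < q) (hq1 : q ≠ 1) (m n p : ℤ) :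
    B q (B q (d m) (d n)) (Gam q (d p))
      + B q (B q (d n) (d p)) (Gam q (d m))
      + B q (B q (d p) (d m)) (Gam q (d n)) = 0 := by
  rw [term_eq, term_eq, term_eq]
  have i2 : n + p + m = m + n + p := by ring
  have i3 : p + m + n = m + n + p := by ring
  rw [i2, i3]
  have h1 := key1 q hq hq1 m n p
  have h2 : (qInt q (m - n) * qBra q p * (if m + n + p = 0 then qGamma q (m + n) else 0))
      + (qInt q (n - p) * qBra q m * (if m + n + p = 0 then qGamma q (n + p) else 0))
      + (qInt q (p - m) * qBra q n * (if m + n + p = 0 then qGamma q (p + m) else 0)) = 0 := by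
    by_cases h : m + n + p = 0
    · simp only [h, if_pos]
      exact key2 q hq hq1 m n p h
    · simp [h]
  calc Finsupp.single (some (m + n + p)) (qInt q (m - n) * qBra q p * qInt q (m + n - p))
        + Finsupp.single none
            (qInt q (m - n) * qBra q p * (if m + n + p = 0 then qGamma q (m + n) else 0))
      + (Finsupp.single (some (m + n + p)) (qInt q (n - p) * qBra q m * qInt q (n + p - m))
        + Finsupp.single none
            (qInt q (n - p) * qBra q m * (if m + n + p = 0 then qGamma q (n + p) else 0)))
      + (Finsupp.single (some (m + n + p)) (qInt q (p - m) * qBra q n * qInt q (p + m - n))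
        + Finsupp.single none
            (qInt q (p - m) * qBra q n * (if m + n + p = 0 then qGamma q (p + m) else 0)))
      = Finsupp.single (some (m + n + p))
          (qInt q (m - n) * qBra q p * qInt q (m + n - p)
            + qInt q (n - p) * qBra q m * qInt q (n + p - m)
            + qInt q (p - m) * qBra q n * qInt q (p + m - n))
        + Finsupp.single none
            ((qInt q (m - n) * qBra q p * (if m + n + p = 0 then qGamma q (m + n) else 0))
            + (qInt q (n - p) * qBra q m * (if m + n + p = 0 then qGamma q (n + p) else 0))
            + (qInt q (p - m) * qBra q n * (if m + n + p = 0 then qGamma q (p + m) else 0))) := by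
        simp only [Finsupp.single_add]
        abel
    _ = 0 := by rw [h1, h2]; simp
end

section
/- For all Laurent polynomials v and w over ℝ, writing v = Σ_k v_k z^k and w = Σ_k w_k z^k, one has res(w · ∂_q² S ∂_q v) = Σ_{n∈ℤ} v_{n+1}·w_{1−n}·[n+1][n][n−1]/⟨n⟩ (a finite sum). Equivalently, dividing by [2][3], the bilinear form φ(v∂_q, w∂_q) := (1/([2][3]))·res(w · ∂_q² S ∂_q v) equals Σ_{n∈ℤ} v_{n+1}·w_{1−n}·γ_n. -/
/-- The q-derivative `∂_q` on `ℝ[z,z⁻¹]`: `∂_q z^k = [k]·z^{k−1}`. -/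
noncomputable def dq (q : ℝ) : LaurentPolynomial ℝ →ₗ[ℝ] LaurentPolynomial ℝ :=
  (AddMonoidAlgebra.coeffLinearEquiv ℝ (S := ℝ) (M := ℤ)).symm.toLinearMap ∘ₗ
    (Finsupp.lsum ℝ fun k => qInt q k • Finsupp.lsingle (k - 1)) ∘ₗ
    (AddMonoidAlgebra.coeffLinearEquiv ℝ (S := ℝ) (M := ℤ)).toLinearMap

/-- The operator `S = (τ + τ⁻¹)⁻¹` on `ℝ[z,z⁻¹]`: `S z^k = z^k/⟨k⟩`. -/
noncomputable def S (q : ℝ) : LaurentPolynomial ℝ →ₗ[ℝ] LaurentPolynomial ℝ :=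
  (AddMonoidAlgebra.coeffLinearEquiv ℝ (S := ℝ) (M := ℤ)).symm.toLinearMap ∘ₗ
    (Finsupp.lsum ℝ fun k => (qBra q k)⁻¹ • Finsupp.lsingle k) ∘ₗ
    (AddMonoidAlgebra.coeffLinearEquiv ℝ (S := ℝ) (M := ℤ)).toLinearMap

/-- `res(f)` is the coefficient of `z^{−1}` in `f`. -/
noncomputable def res (f : LaurentPolynomial ℝ) : ℝ := f.coeff (-1)

lemma dq_single (q : ℝ) (a : ℤ) (x : ℝ) :
    dq q (AddMonoidAlgebra.single a x) = AddMonoidAlgebra.single (a - 1) (qInt q a * x) := by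
  rw [dq]
  apply AddMonoidAlgebra.coeff_injective
  simp only [LinearMap.comp_apply, LinearEquiv.coe_coe, AddMonoidAlgebra.coeffLinearEquiv_apply,
    AddMonoidAlgebra.coeffLinearEquiv_symm_apply, AddMonoidAlgebra.coeff_ofCoeff,
    AddMonoidAlgebra.coeff_single, Finsupp.lsum_single, LinearMap.smul_apply,
    Finsupp.lsingle_apply, Finsupp.smul_single, smul_eq_mul]

lemma S_single (q : ℝ) (a : ℤ) (x : ℝ) :
    S q (AddMonoidAlgebra.single a x) = AddMonoidAlgebra.single a ((qBra q a)⁻¹ * x) := by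
  rw [S]
  apply AddMonoidAlgebra.coeff_injective
  simp only [LinearMap.comp_apply, LinearEquiv.coe_coe, AddMonoidAlgebra.coeffLinearEquiv_apply,
    AddMonoidAlgebra.coeffLinearEquiv_symm_apply, AddMonoidAlgebra.coeff_ofCoeff,
    AddMonoidAlgebra.coeff_single, Finsupp.lsum_single, LinearMap.smul_apply,
    Finsupp.lsingle_apply, Finsupp.smul_single, smul_eq_mul]

lemma dq_apply (q : ℝ) (f : LaurentPolynomial ℝ) (j : ℤ) :
    (dq q f).coeff j = qInt q (j + 1) * f.coeff (j + 1) := by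
  classical
  induction f using AddMonoidAlgebra.induction_linear with
  | zero => simp
  | add f g hf hg =>
      rw [map_add, AddMonoidAlgebra.coeff_add, Finsupp.add_apply, hf, hg,
        AddMonoidAlgebra.coeff_add, Finsupp.add_apply]
      ring
  | single a x =>
      rw [dq_single, AddMonoidAlgebra.coeff_single, AddMonoidAlgebra.coeff_single,
        Finsupp.single_apply, Finsupp.single_apply]
      by_cases h : a = j + 1
      · subst h
        rw [if_pos (by ring), if_pos rfl]
      · rw [if_neg (by omega), if_neg (by omega), mul_zero]

lemma S_apply (q : ℝ) (f : LaurentPolynomial ℝ) (j : ℤ) :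
    (S q f).coeff j = (qBra q j)⁻¹ * f.coeff j := by
  classical
  induction f using AddMonoidAlgebra.induction_linear with
  | zero => simp
  | add f g hf hg =>
      rw [map_add, AddMonoidAlgebra.coeff_add, Finsupp.add_apply, hf, hg,
        AddMonoidAlgebra.coeff_add, Finsupp.add_apply]
      ring
  | single a x =>
      rw [S_single, AddMonoidAlgebra.coeff_single, AddMonoidAlgebra.coeff_single,
        Finsupp.single_apply, Finsupp.single_apply]
      by_cases h : a = j
      · subst h; simp
      · rw [if_neg h, if_neg h, mul_zero]

lemma res_mul (w u : LaurentPolynomial ℝ) :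
    res (w * u) = ∑ᶠ a : ℤ, w.coeff a * u.coeff (-1 - a) := by
  classical
  rw [res, AddMonoidAlgebra.mul_apply]
  have step : (w.coeff.sum fun a₁ b₁ => u.coeff.sum fun a₂ b₂ => if a₁ + a₂ = -1 then b₁ * b₂ else 0)
      = w.coeff.sum fun a₁ b₁ => b₁ * u.coeff (-1 - a₁) := by
    refine Finsupp.sum_congr fun a₁ _ => ?_
    have h1 : (u.coeff.sum fun a₂ b₂ => if a₁ + a₂ = -1 then w.coeff a₁ * b₂ else 0)
        = u.coeff.sum fun a₂ b₂ => if a₂ = -1 - a₁ then w.coeff a₁ * b₂ else 0 := by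
      refine Finsupp.sum_congr fun a₂ _ => ?_
      by_cases h : a₁ + a₂ = -1
      · rw [if_pos h, if_pos (by omega)]
      · rw [if_neg h, if_neg (by omega)]
    rw [h1, Finsupp.sum_ite_eq']
    split_ifs with h
    · rfl
    · rw [Finsupp.notMem_support_iff.mp h, mul_zero]
  rw [step]
  rw [Finsupp.sum]
  refine (finsum_eq_sum_of_support_subset _ ?_).symm
  intro a ha
  simp only [Function.mem_support] at ha
  simp only [Finset.mem_coe, Finsupp.mem_support_iff]
  intro h
  exact ha (by rw [h, zero_mul])

lemma op_apply (q : ℝ) (v : LaurentPolynomial ℝ) (n : ℤ) :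
    (dq q (dq q (S q (dq q v)))).coeff (n - 2)
      = qInt q (n + 1) * qInt q n * qInt q (n - 1) * (qBra q n)⁻¹ * v.coeff (n + 1) := by
  rw [dq_apply, dq_apply, S_apply, dq_apply]
  have e1 : n - 2 + 1 = n - 1 := by ring
  have e2 : n - 1 + 1 = n := by ring
  rw [e1, e2]
  ring

/-- For Laurent polynomials `v = Σ v_k z^k`, `w = Σ w_k z^k`:
`res(w·∂_q²S∂_q v) = Σ_{n∈ℤ} v_{n+1}·w_{1−n}·[n+1][n][n−1]/⟨n⟩`, and equivalently
`φ(v∂_q, w∂_q) := (1/([2][3]))·res(w·∂_q²S∂_q v) = Σ_{n∈ℤ} v_{n+1}·w_{1−n}·γ_n`. -/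
theorem res_cocycle_formula (q : ℝ) (hq : 0 < q) (hq1 : q ≠ 1)
    (v w : LaurentPolynomial ℝ) :
    res (w * dq q (dq q (S q (dq q v))))
        = ∑ᶠ n : ℤ, v.coeff (n + 1) * w.coeff (1 - n)
            * (qInt q (n + 1) * qInt q n * qInt q (n - 1) / qBra q n)
      ∧ (1 / (qInt q 2 * qInt q 3)) * res (w * dq q (dq q (S q (dq q v))))
        = ∑ᶠ n : ℤ, v.coeff (n + 1) * w.coeff (1 - n) * qGamma q n := by
  classical
  have hq0 : q ≠ 0 := ne_of_gt hq
  have hbra : ∀ n : ℤ, 0 < qBra q n := fun n => by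
    have h1 : (0:ℝ) < q ^ n := zpow_pos hq n
    have h2 : (0:ℝ) < q ^ (-n) := zpow_pos hq (-n)
    rw [qBra]; linarith
  have hd : q - q⁻¹ ≠ 0 := by
    intro h
    have hqq : q * q = 1 := by
      have h' : q = q⁻¹ := by linarith [sub_eq_zero.mp h]
      calc q * q = q * q⁻¹ := by rw [← h']
        _ = 1 := mul_inv_cancel₀ hq0
    rcases mul_self_eq_one_iff.mp hqq with h1 | h1
    · exact hq1 h1
    · linarith
  have e2 : q ^ (2:ℤ) = q * q := by
    rw [show (2:ℤ) = ((2:ℕ):ℤ) by norm_num, zpow_natCast]; ring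
  have e3 : q ^ (3:ℤ) = q * q * q := by
    rw [show (3:ℤ) = ((3:ℕ):ℤ) by norm_num, zpow_natCast]; ring
  have h2 : qInt q 2 = q + q⁻¹ := by
    rw [qInt, div_eq_iff hd, zpow_neg, e2]
    field_simp
    ring
  have h3 : qInt q 3 = q * q + 1 + (q * q)⁻¹ := by
    rw [qInt, div_eq_iff hd, zpow_neg, e3]
    field_simp
    ring
  have h2pos : 0 < qInt q 2 := by
    rw [h2]; positivity
  have h3pos : 0 < qInt q 3 := by
    rw [h3]; positivity
  have h23 : qInt q 2 * qInt q 3 ≠ 0 := ne_of_gt (mul_pos h2pos h3pos)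
  -- the first equality
  have key : res (w * dq q (dq q (S q (dq q v))))
      = ∑ᶠ n : ℤ, v.coeff (n + 1) * w.coeff (1 - n)
          * (qInt q (n + 1) * qInt q n * qInt q (n - 1) / qBra q n) := by
    rw [res_mul]
    rw [← finsum_comp_equiv (Equiv.subLeft (1:ℤ))
      (f := fun a : ℤ => w.coeff a * (dq q (dq q (S q (dq q v)))).coeff (-1 - a))]
    refine finsum_congr fun n => ?_
    have ea : -1 - Equiv.subLeft (1:ℤ) n = n - 2 := by
      simp [Equiv.subLeft]; ring
    have eb : (Equiv.subLeft (1:ℤ) n : ℤ) = 1 - n := by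
      simp [Equiv.subLeft]
    rw [ea, eb, op_apply]
    rw [div_eq_mul_inv]
    ring
  refine ⟨key, ?_⟩
  rw [key]
  have hfin : (Function.support fun n : ℤ => v.coeff (n + 1) * w.coeff (1 - n)
      * (qInt q (n + 1) * qInt q n * qInt q (n - 1) / qBra q n)).Finite := by
    apply Set.Finite.subset (Set.Finite.image (fun k : ℤ => k - 1) v.coeff.support.finite_toSet)
    intro n hn
    simp only [Function.mem_support] at hn
    have hv : v.coeff (n + 1) ≠ 0 := by
      intro h
      exact hn (by rw [h, zero_mul, zero_mul])
    refine ⟨n + 1, ?_, by ring⟩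
    simpa using hv
  rw [mul_finsum' _ _ hfin]
  refine finsum_congr fun n => ?_
  rw [qGamma]
  have hb : qBra q n ≠ 0 := ne_of_gt (hbra n)
  field_simp
end
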